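/- If g_1,...,g_n is an irredundant generating sequence of a finite group G, and for each i we choose a maximal subgroup M_i containing the subgroup generated by {g_j : j ≠ i}, then the subgroups M_1,...,M_n are in general position. -/
import Mathlib


/-- A sequence `g : Fin n → G` is irredundant if no `g i` lies in the subgroup
generated by the other elements. -/
def Irredundant {G : Type*} [Group G] {n : ℕ} (g : Fin n → G) : Prop :=
  ∀ i, g i ∉ Subgroup.closure (g '' {j | j ≠ i})

/-- Subgroups `H 1, ..., H n` are in general position if for each `i` the intersection
of the `H j`, `j ≠ i`, strictly contains the intersection of all of them. -/
def GeneralPosition {G : Type*} [Group G] {n : ℕ} (H : Fin n → Subgroup G) : Prop :=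
  ∀ i, (⨅ j, H j) < ⨅ j : {j : Fin n // j ≠ i}, H j

/-- `m G`: maximal length of an irredundant generating sequence. -/
noncomputable def mDim (G : Type*) [Group G] : ℕ :=
  sSup {n | ∃ g : Fin n → G, Irredundant g ∧ Subgroup.closure (Set.range g) = ⊤}

/-- `i G`: maximal length of an irredundant sequence. -/
noncomputable def iDim (G : Type*) [Group G] : ℕ :=
  sSup {n | ∃ g : Fin n → G, Irredundant g}

/-- `MaxDim G`: maximal size of a family of maximal subgroups in general position. -/
noncomputable def MaxDim (G : Type*) [Group G] : ℕ :=
  sSup {n | ∃ H : Fin n → Subgroup G, (∀ i, IsCoatom (H i)) ∧ GeneralPosition H}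

/-- If `g` is an irredundant generating sequence and each `M i` is a maximal subgroup
containing `⟨g j : j ≠ i⟩`, then the `M i` are in general position. -/
theorem maximal_overgroups_generalPosition {G : Type*} [Group G] [Finite G] {n : ℕ}
    (g : Fin n → G) (hirr : Irredundant g)
    (hgen : Subgroup.closure (Set.range g) = ⊤)
    (M : Fin n → Subgroup G) (hmax : ∀ i, IsCoatom (M i))
    (hM : ∀ i, Subgroup.closure (g '' {j | j ≠ i}) ≤ M i) :
    GeneralPosition M := by
  intro i
  have hle : (⨅ j, M j) ≤ ⨅ j : {j : Fin n // j ≠ i}, M j :=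
    le_iInf fun j => iInf_le _ j.1
  refine lt_of_le_of_ne hle fun heq => ?_
  -- g i belongs to all M j with j ≠ i
  have hmem : g i ∈ ⨅ j : {j : Fin n // j ≠ i}, M j := by
    refine Subgroup.mem_iInf.2 fun j => ?_
    exact hM j.1 (Subgroup.subset_closure ⟨i, fun h => j.2 h.symm, rfl⟩)
  rw [← heq] at hmem
  have hi : g i ∈ M i := (Subgroup.mem_iInf.1 hmem) i
  -- then M i contains all generators
  have : Subgroup.closure (Set.range g) ≤ M i := by
    refine (Subgroup.closure_le _).2 ?_
    rintro _ ⟨j, rfl⟩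
    by_cases hji : j = i
    · subst hji; exact hi
    · exact hM i (Subgroup.subset_closure ⟨j, hji, rfl⟩)
  rw [hgen] at this
  exact (hmax i).1 (top_le_iff.1 this)
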